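/- If A ⊆ ℝ^n is a finite set such that the set of nonzero Euclidean distances between distinct points of A has at most s elements, then |A| ≤ C(n+s, s). -/

import Mathlib

noncomputable section

/-- The set of nonzero distances determined by a set `A` in Euclidean space. -/
def distSet {n : ℕ} (A : Set (EuclideanSpace ℝ (Fin n))) : Set ℝ :=
  {d | ∃ p ∈ A, ∃ q ∈ A, p ≠ q ∧ dist p q = d}

namespace BBSAux

open Finset

variable {n : ℕ}

/-- The monomial function attached to a multiset of coordinates. -/
def word (v : Multiset (Fin n)) (p : EuclideanSpace ℝ (Fin n)) : ℝ :=
  (v.map fun t => p t).prod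

lemma word_add (v w : Multiset (Fin n)) (p : EuclideanSpace ℝ (Fin n)) :
    word (v + w) p = word v p * word w p := by
  simp [word, Multiset.map_add, Multiset.prod_add]

lemma word_finset {k : ℕ} (t : Finset (Fin k)) (G : Fin k → Fin n)
    (p : EuclideanSpace ℝ (Fin n)) :
    word (t.val.map G) p = ∏ r ∈ t, p (G r) := by
  rw [word, Multiset.map_map, Finset.prod_eq_multiset_prod]
  rfl

lemma filterMap_pad (v : Multiset (Fin n)) (c : ℕ) :
    (v.map some + Multiset.replicate c none).filterMap id = v := by
  induction c with
  | zero =>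
      simp only [Multiset.replicate_zero, add_zero]
      rw [Multiset.filterMap_map]
      rw [show ((id : Option (Fin n) → Option (Fin n)) ∘ some) = some from rfl]
      exact Multiset.filterMap_some v
  | succ c ih =>
      rw [Multiset.replicate_succ, Multiset.add_cons, Multiset.filterMap_cons_none _ _ rfl, ih]

lemma dist_sq_eq (p q : EuclideanSpace ℝ (Fin n)) :
    dist p q ^ 2 = ∑ t, (p t - q t) ^ 2 := by
  rw [EuclideanSpace.dist_eq]
  rw [Real.sq_sqrt (Finset.sum_nonneg fun t _ => sq_nonneg _)]
  exact Finset.sum_congr rfl fun t _ => by rw [Real.dist_eq, sq_abs]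

/-- The monomial function restricted to a finite set, as an element of Euclidean space. -/
def wordFun (A : Finset (EuclideanSpace ℝ (Fin n))) (v : Multiset (Fin n)) :
    EuclideanSpace ℝ {y // y ∈ A} := WithLp.toLp 2 (fun a : {y // y ∈ A} => word v a.1)

def symFun (A : Finset (EuclideanSpace ℝ (Fin n))) (s : ℕ) :
    Sym (Option (Fin n)) s → EuclideanSpace ℝ {y // y ∈ A} :=
  fun w => wordFun A (w.1.filterMap id)

lemma symFun_pad (A : Finset (EuclideanSpace ℝ (Fin n))) (s : ℕ)
    (v : Multiset (Fin n)) (hv : v.card ≤ s) :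
    symFun A s ⟨v.map some + Multiset.replicate (s - v.card) none, by
      rw [Multiset.card_add, Multiset.card_map, Multiset.card_replicate]; omega⟩
      = wordFun A v :=
  congrArg (wordFun A) (filterMap_pad v (s - v.card))

section Core

variable {ι : Type*} [Fintype ι] (μ : ι → ℝ)

lemma swap3 {γ : Type*} (I : Finset γ) (F : ι → ι → γ → ℝ) :
    ∑ a, ∑ b, μ a * μ b * (∑ i ∈ I, F a b i)
      = ∑ i ∈ I, ∑ a, ∑ b, μ a * μ b * F a b i := by
  simp_rw [Finset.mul_sum]
  calc ∑ a, ∑ b, ∑ i ∈ I, μ a * μ b * F a b i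
      = ∑ a, ∑ i ∈ I, ∑ b, μ a * μ b * F a b i :=
        Finset.sum_congr rfl fun a _ => Finset.sum_comm
    _ = ∑ i ∈ I, ∑ a, ∑ b, μ a * μ b * F a b i := Finset.sum_comm

lemma factored_zero {γ : Type*} (I : Finset γ) (c : γ → ℝ) (fa fb : γ → ι → ℝ)
    (h : ∀ i ∈ I, (∑ a, μ a * fa i a) = 0 ∨ (∑ b, μ b * fb i b) = 0) :
    ∑ a, ∑ b, μ a * μ b * (∑ i ∈ I, c i * (fa i a * fb i b)) = 0 := by
  rw [swap3]
  refine Finset.sum_eq_zero fun i hi => ?_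
  have inner : ∀ a, ∑ b, μ a * μ b * (c i * (fa i a * fb i b))
      = (μ a * fa i a) * (c i * ∑ b, μ b * fb i b) := by
    intro a
    rw [Finset.mul_sum, Finset.mul_sum]
    exact Finset.sum_congr rfl fun b _ => by ring
  have hfac : ∑ a, ∑ b, μ a * μ b * (c i * (fa i a * fb i b))
      = (∑ a, μ a * fa i a) * (c i * ∑ b, μ b * fb i b) := by
    rw [Finset.sum_mul]
    exact Finset.sum_congr rfl fun a _ => inner a
  rcases h i hi with h0 | h0
  · rw [hfac, h0, zero_mul]
  · rw [hfac, h0, mul_zero, mul_zero]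

/-- Expansion of the `k`-th power of the squared distance into products of
separated monomial functions. -/
lemma E_pow_repr (k : ℕ) (p q : EuclideanSpace ℝ (Fin n)) :
    (∑ t, (p t - q t) ^ 2) ^ k
      = ∑ i : (Fin k → Fin n) × Finset (Fin k) × Finset (Fin k),
          ((-1 : ℝ)) ^ ((i.2.1ᶜ).card + (i.2.2ᶜ).card) *
          (word (i.2.1.val.map i.1 + i.2.2.val.map i.1) p *
           word ((i.2.1ᶜ).val.map i.1 + (i.2.2ᶜ).val.map i.1) q) := by
  rw [Fintype.sum_pow, Fintype.sum_prod_type]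
  refine Finset.sum_congr rfl fun G _ => ?_
  rw [Fintype.sum_prod_type]
  have h1 : ∏ r, (p (G r) - q (G r)) ^ 2 = (∏ r, (p (G r) + -q (G r))) ^ 2 := by
    rw [← Finset.prod_pow]
    exact Finset.prod_congr rfl fun r _ => by ring
  rw [h1, Fintype.prod_add, sq, Finset.sum_mul_sum]
  refine Finset.sum_congr rfl fun t₁ _ => Finset.sum_congr rfl fun t₂ _ => ?_
  have hneg : ∀ t : Finset (Fin k), ∏ r ∈ t, (-q (G r)) = (-1 : ℝ) ^ t.card * ∏ r ∈ t, q (G r) := by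
    intro t
    rw [← Finset.prod_const, ← Finset.prod_mul_distrib]
    exact Finset.prod_congr rfl fun r _ => by ring
  rw [hneg, hneg, word_add, word_add, word_finset, word_finset, word_finset, word_finset,
    pow_add]
  ring

variable (s : ℕ) (x : ι → EuclideanSpace ℝ (Fin n))

lemma sum_sum_E_pow
    (hz : ∀ v : Multiset (Fin n), v.card ≤ s → ∑ a, μ a * word v (x a) = 0)
    (k : ℕ) (hk : k ≤ s) :
    ∑ a, ∑ b, μ a * μ b * (∑ t, (x a t - x b t) ^ 2) ^ k = 0 := by
  have : ∑ a, ∑ b, μ a * μ b * (∑ t, (x a t - x b t) ^ 2) ^ k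
      = ∑ a, ∑ b, μ a * μ b *
        (∑ i ∈ (Finset.univ : Finset ((Fin k → Fin n) × Finset (Fin k) × Finset (Fin k))),
          ((-1 : ℝ)) ^ ((i.2.1ᶜ).card + (i.2.2ᶜ).card) *
          (word (i.2.1.val.map i.1 + i.2.2.val.map i.1) (x a) *
           word ((i.2.1ᶜ).val.map i.1 + (i.2.2ᶜ).val.map i.1) (x b))) := by
    exact Finset.sum_congr rfl fun a _ => Finset.sum_congr rfl fun b _ => by
      rw [E_pow_repr]
  rw [this]
  refine factored_zero μ _ _ _ _ fun i _ => ?_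
  obtain ⟨G, t₁, t₂⟩ := i
  have hcompl₁ : t₁.card + t₁ᶜ.card = k := by
    rw [Finset.card_add_card_compl, Fintype.card_fin]
  have hcompl₂ : t₂.card + t₂ᶜ.card = k := by
    rw [Finset.card_add_card_compl, Fintype.card_fin]
  by_cases hle : t₁.card + t₂.card ≤ s
  · left
    refine hz _ ?_
    simp only [Multiset.card_add, Multiset.card_map, Finset.card_val]
    exact hle
  · right
    refine hz _ ?_
    simp only [Multiset.card_add, Multiset.card_map, Finset.card_val]
    omega

end Core

end BBSAux

open BBSAux Finset

/-- Bannai–Bannai–Stanton bound for `s`-distance sets in `ℝ^n`. -/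
theorem bannai_bannai_stanton {n s : ℕ} (A : Finset (EuclideanSpace ℝ (Fin n)))
    (hA : (distSet (A : Set (EuclideanSpace ℝ (Fin n)))).ncard ≤ s) :
    A.card ≤ (n + s).choose s := by
  classical
  have hfin : (distSet (A : Set (EuclideanSpace ℝ (Fin n)))).Finite := by
    refine Set.Finite.subset (Set.Finite.image2 dist A.finite_toSet A.finite_toSet) ?_
    rintro d ⟨p, hp, q, hq, -, rfl⟩
    exact Set.mem_image2_of_mem hp hq
  set D : Finset ℝ := hfin.toFinset with hDdef
  have hDcard : D.card ≤ s := by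
    rwa [Set.ncard_eq_toFinset_card _ hfin] at hA
  have hDmem : ∀ p ∈ A, ∀ q ∈ A, p ≠ q → dist p q ∈ D := fun p hp q hq hne =>
    hfin.mem_toFinset.mpr ⟨p, hp, q, hq, hne, rfl⟩
  have hDne : ∀ d ∈ D, d ≠ 0 := by
    intro d hd
    obtain ⟨p, hp, q, hq, hne, rfl⟩ := hfin.mem_toFinset.mp hd
    exact dist_ne_zero.mpr hne
  -- the space of functions on A and the span of low-degree monomials
  let V := EuclideanSpace ℝ {y // y ∈ A}
  let S : Submodule ℝ V := Submodule.span ℝ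
    {f : V | ∃ v : Multiset (Fin n), v.card ≤ s ∧ f = wordFun A v}
  have hStop : S = ⊤ := by
    rw [← Submodule.orthogonal_eq_bot_iff, Submodule.eq_bot_iff]
    intro μ hμ
    have hz : ∀ v : Multiset (Fin n), v.card ≤ s →
        ∑ a : {y // y ∈ A}, μ a * word v a.1 = 0 := by
      intro v hv
      have hmem : wordFun A v ∈ S := Submodule.subset_span ⟨v, hv, rfl⟩
      have h0 := (Submodule.mem_orthogonal S μ).mp hμ _ hmem
      rw [PiLp.inner_apply] at h0
      simp only [RCLike.inner_apply, starRingEnd_apply, star_trivial] at h0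
      rw [← h0]
      exact Finset.sum_congr rfl fun a _ => by rfl
    -- the double sum
    set e : EuclideanSpace ℝ (Fin n) → EuclideanSpace ℝ (Fin n) → ℝ :=
      fun p q => ∑ t, (p t - q t) ^ 2 with hedef
    have key : ∑ a : {y // y ∈ A}, ∑ b : {y // y ∈ A},
        μ a * μ b * ∏ d ∈ D, (e a.1 b.1 - d ^ 2) = 0 := by
      have expand : ∀ p q : EuclideanSpace ℝ (Fin n), ∏ d ∈ D, (e p q - d ^ 2)
          = ∑ t ∈ D.powerset, (e p q) ^ t.card * ∏ d ∈ D \ t, (-(d ^ 2)) := by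
        intro p q
        calc ∏ d ∈ D, (e p q - d ^ 2) = ∏ d ∈ D, (e p q + (-(d ^ 2))) :=
              Finset.prod_congr rfl fun d _ => by ring
          _ = ∑ t ∈ D.powerset, (∏ _d ∈ t, e p q) * ∏ d ∈ D \ t, (-(d ^ 2)) :=
              Finset.prod_add _ _ D
          _ = _ := Finset.sum_congr rfl fun t _ => by rw [Finset.prod_const]
      have : ∑ a : {y // y ∈ A}, ∑ b : {y // y ∈ A},
          μ a * μ b * ∏ d ∈ D, (e a.1 b.1 - d ^ 2)
          = ∑ t ∈ D.powerset, ∑ a : {y // y ∈ A}, ∑ b : {y // y ∈ A},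
              μ a * μ b * ((e a.1 b.1) ^ t.card * ∏ d ∈ D \ t, (-(d ^ 2))) := by
        rw [← swap3]
        exact Finset.sum_congr rfl fun a _ => Finset.sum_congr rfl fun b _ => by rw [expand]
      rw [this]
      refine Finset.sum_eq_zero fun t ht => ?_
      have hcard : t.card ≤ s := le_trans (Finset.card_le_card (Finset.mem_powerset.mp ht)) hDcard
      have hsplit : ∑ a : {y // y ∈ A}, ∑ b : {y // y ∈ A},
          μ a * μ b * ((e a.1 b.1) ^ t.card * ∏ d ∈ D \ t, (-(d ^ 2)))
          = (∏ d ∈ D \ t, (-(d ^ 2))) *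
            ∑ a : {y // y ∈ A}, ∑ b : {y // y ∈ A}, μ a * μ b * (e a.1 b.1) ^ t.card := by
        rw [Finset.mul_sum]
        refine Finset.sum_congr rfl fun a _ => ?_
        rw [Finset.mul_sum]
        exact Finset.sum_congr rfl fun b _ => by ring
      rw [hsplit, sum_sum_E_pow μ s (fun a : {y // y ∈ A} => a.1) hz t.card hcard,
        mul_zero]
    have diag : ∑ a : {y // y ∈ A}, ∑ b : {y // y ∈ A},
        μ a * μ b * ∏ d ∈ D, (e a.1 b.1 - d ^ 2)
        = (∏ d ∈ D, (-(d ^ 2))) * ∑ a : {y // y ∈ A}, μ a ^ 2 := by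
      rw [Finset.mul_sum]
      refine Finset.sum_congr rfl fun a _ => ?_
      rw [Finset.sum_eq_single a]
      · have h0 : e a.1 a.1 = 0 := by simp [hedef]
        rw [h0]
        have : ∏ d ∈ D, ((0 : ℝ) - d ^ 2) = ∏ d ∈ D, (-(d ^ 2)) :=
          Finset.prod_congr rfl fun d _ => by ring
        rw [this]; ring
      · intro b _ hne
        have hxy : a.1 ≠ b.1 := fun h => hne.symm (Subtype.ext h)
        have hd : dist a.1 b.1 ∈ D := hDmem _ a.2 _ b.2 hxy
        have he : e a.1 b.1 = dist a.1 b.1 ^ 2 := (dist_sq_eq _ _).symm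
        rw [Finset.prod_eq_zero hd (by rw [he]; ring), mul_zero]
      · intro h; exact absurd (Finset.mem_univ a) h
    have hprod : (∏ d ∈ D, (-(d ^ 2))) ≠ 0 := by
      refine Finset.prod_ne_zero_iff.mpr fun d hd => ?_
      exact neg_ne_zero.mpr (pow_ne_zero 2 (hDne d hd))
    have hsum : ∑ a : {y // y ∈ A}, μ a ^ 2 = 0 := by
      have := key
      rw [diag] at this
      exact (mul_eq_zero.mp this).resolve_left hprod
    have : ∀ a : {y // y ∈ A}, μ a = 0 := by
      intro a
      have h := (Finset.sum_eq_zero_iff_of_nonneg fun i _ => sq_nonneg (μ i)).mp hsum a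
        (Finset.mem_univ a)
      exact pow_eq_zero_iff two_ne_zero |>.mp h
    ext a
    exact this a
  -- counting
  have hsub : S ≤ Submodule.span ℝ (Set.range (symFun A s)) := by
    rw [Submodule.span_le]
    rintro f ⟨v, hv, rfl⟩
    exact Submodule.subset_span ⟨_, symFun_pad A s v hv⟩
  have hcount : Fintype.card (Sym (Option (Fin n)) s) = (n + s).choose s := by
    rw [Sym.card_sym_eq_multichoose, Nat.multichoose_eq, Fintype.card_option, Fintype.card_fin]
    congr 1
    omega
  have hrank : A.card ≤ Fintype.card (Sym (Option (Fin n)) s) := by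
    have htop : Submodule.span ℝ (Set.range (symFun A s)) = ⊤ := top_unique (hStop ▸ hsub)
    have h1 : Module.finrank ℝ V = Module.finrank ℝ (Submodule.span ℝ (Set.range (symFun A s))) := by
      rw [htop, finrank_top]
    have h2 : Module.finrank ℝ (Submodule.span ℝ (Set.range (symFun A s)))
        ≤ Fintype.card (Sym (Option (Fin n)) s) := by
      rw [← Set.image_univ, ← Finset.coe_univ, ← Finset.coe_image]
      refine le_trans (finrank_span_finset_le_card _) ?_
      exact le_trans Finset.card_image_le (le_of_eq (Finset.card_univ))
    have h3 : Module.finrank ℝ V = A.card := by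
      rw [finrank_euclideanSpace, Fintype.card_coe]
    omega
  omega

end
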